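/- The number of 2-Motzkin paths of length n-1 with exactly k-1 up steps is (2^(n-2k+1)/k)·C(n-1,2k-2)·C(2k-2,k-1). -/

import Mathlib

/-- Steps of a 2-Motzkin path: up, down, red horizontal, blue horizontal. -/
inductive Step2 where
  | up : Step2
  | down : Step2
  | red : Step2
  | blue : Step2
deriving DecidableEq

/-- The height change of a step. -/
def Step2.h : Step2 → ℤ
  | .up => 1
  | .down => -1
  | .red => 0
  | .blue => 0

/-- A list of steps is a 2-Motzkin path if it ends at height 0 and
no prefix goes below the x-axis. -/
def IsTwoMotzkin (p : List Step2) : Prop :=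
  (p.map Step2.h).sum = 0 ∧ ∀ q : List Step2, q <+: p → 0 ≤ (q.map Step2.h).sum

open List

namespace TM

def vert : Step2 → Bool
  | .up => true | .down => true | .red => false | .blue => false

def toD : Step2 → DyckStep
  | .up => .U | _ => .D

def ofD : DyckStep → Step2
  | .U => .up | .D => .down

def colOf : Step2 → Bool
  | .red => true | _ => false

def ofCol : Bool → Step2
  | true => .red | false => .blue

@[simp] lemma vert_up : vert .up = true := rfl
@[simp] lemma vert_down : vert .down = true := rfl
@[simp] lemma vert_red : vert .red = false := rfl
@[simp] lemma vert_blue : vert .blue = false := rfl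
@[simp] lemma toD_up : toD .up = .U := rfl
@[simp] lemma toD_down : toD .down = .D := rfl
@[simp] lemma colOf_red : colOf .red = true := rfl
@[simp] lemma colOf_blue : colOf .blue = false := rfl
@[simp] lemma ofD_U : ofD .U = .up := rfl
@[simp] lemma ofD_D : ofD .D = .down := rfl
@[simp] lemma ofCol_t : ofCol true = .red := rfl
@[simp] lemma ofCol_f : ofCol false = .blue := rfl

@[simp] lemma vert_ofD (d : DyckStep) : vert (ofD d) = true := by cases d <;> rfl
@[simp] lemma vert_ofCol (b : Bool) : vert (ofCol b) = false := by cases b <;> rfl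
@[simp] lemma toD_ofD (d : DyckStep) : toD (ofD d) = d := by cases d <;> rfl
@[simp] lemma colOf_ofCol (b : Bool) : colOf (ofCol b) = b := by cases b <;> rfl

def merge : List Bool → List DyckStep → List Bool → List Step2
  | [], _, _ => []
  | true :: t, d :: v, c => ofD d :: merge t v c
  | true :: t, [], c => merge t [] c
  | false :: t, v, b :: c => ofCol b :: merge t v c
  | false :: t, v, [] => merge t v []

lemma merge_map_vert : ∀ (t : List Bool) (v : List DyckStep) (c : List Bool),
    v.length = t.count true → c.length = t.count false →
    (merge t v c).map vert = t
  | [], _, _, _, _ => rfl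
  | true :: t, d :: v, c, hv, hc => by
      simp only [merge, map_cons, vert_ofD]
      rw [merge_map_vert t v c (by simpa using hv) (by simpa using hc)]
  | true :: t, [], c, hv, hc => by simp at hv
  | false :: t, v, b :: c, hv, hc => by
      simp only [merge, map_cons, vert_ofCol]
      rw [merge_map_vert t v c (by simpa using hv) (by simpa using hc)]
  | false :: t, v, [], hv, hc => by simp at hc

lemma merge_filter_vert : ∀ (t : List Bool) (v : List DyckStep) (c : List Bool),
    v.length = t.count true → c.length = t.count false →
    (merge t v c).filter vert = v.map ofD
  | [], v, _, hv, _ => by simp at hv; simp [merge, hv]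
  | true :: t, d :: v, c, hv, hc => by
      simp only [merge, filter_cons, vert_ofD, if_true, map_cons]
      rw [merge_filter_vert t v c (by simpa using hv) (by simpa using hc)]
  | true :: t, [], c, hv, hc => by simp at hv
  | false :: t, v, b :: c, hv, hc => by
      simp only [merge, filter_cons, vert_ofCol]
      simpa using merge_filter_vert t v c (by simpa using hv) (by simpa using hc)
  | false :: t, v, [], hv, hc => by simp at hc

lemma merge_filter_horiz : ∀ (t : List Bool) (v : List DyckStep) (c : List Bool),
    v.length = t.count true → c.length = t.count false →
    (merge t v c).filter (fun s => !vert s) = c.map ofCol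
  | [], _, c, _, hc => by simp at hc; simp [merge, hc]
  | true :: t, d :: v, c, hv, hc => by
      simp only [merge, filter_cons, vert_ofD]
      simpa using merge_filter_horiz t v c (by simpa using hv) (by simpa using hc)
  | true :: t, [], c, hv, hc => by simp at hv
  | false :: t, v, b :: c, hv, hc => by
      simp only [merge, filter_cons, vert_ofCol, map_cons]
      simpa using merge_filter_horiz t v c (by simpa using hv) (by simpa using hc)
  | false :: t, v, [], hv, hc => by simp at hc

lemma merge_decomp : ∀ (p : List Step2),
    merge (p.map vert) ((p.filter vert).map toD)
      ((p.filter (fun s => !vert s)).map colOf) = p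
  | [] => rfl
  | s :: p => by
      cases s <;> simp [merge, merge_decomp p, filter_cons]

lemma h_of_not_vert {a : Step2} (ha : vert a = false) : a.h = 0 := by
  cases a <;> simp_all [vert, Step2.h]

def NN (c : ℤ) (p : List Step2) : Prop := ∀ q, q <+: p → 0 ≤ c + (q.map Step2.h).sum

lemma NN.nonneg {c p} (h : NN c p) : 0 ≤ c := by simpa using h [] nil_prefix

lemma NN_nil {c} : NN c [] ↔ 0 ≤ c := by
  refine ⟨fun h => h.nonneg, fun h q hq => ?_⟩
  simp [List.prefix_nil.mp hq, h]

lemma NN_cons {c} {a : Step2} {t} : NN c (a :: t) ↔ 0 ≤ c ∧ NN (c + a.h) t := by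
  constructor
  · intro h
    refine ⟨h.nonneg, fun q hq => ?_⟩
    have := h (a :: q) (by simpa using hq)
    simp at this
    linarith
  · rintro ⟨h0, h⟩ q hq
    cases q with
    | nil => simpa using h0
    | cons b q' =>
      rw [List.cons_prefix_cons] at hq
      obtain ⟨rfl, hq'⟩ := hq
      have := h q' hq'
      simp
      linarith

lemma NN_filter (c : ℤ) (p : List Step2) : NN c p ↔ NN c (p.filter vert) := by
  induction p generalizing c with
  | nil => rfl
  | cons a t ih =>
    rcases hva : vert a with _ | _
    · rw [filter_cons_of_neg (by simp [hva]), NN_cons, h_of_not_vert hva, add_zero, ← ih]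
      exact ⟨fun h => h.2, fun h => ⟨h.nonneg, h⟩⟩
    · rw [filter_cons_of_pos hva, NN_cons, NN_cons, ih]

lemma sum_filter_vert (p : List Step2) :
    ((p.filter vert).map Step2.h).sum = (p.map Step2.h).sum := by
  induction p with
  | nil => rfl
  | cons a t ih =>
    rcases hva : vert a with _ | _
    · rw [filter_cons_of_neg (by simp [hva])]
      simp [ih, h_of_not_vert hva]
    · rw [filter_cons_of_pos hva]
      simp [ih]

lemma isTwoMotzkin_filter (p : List Step2) :
    IsTwoMotzkin p ↔ IsTwoMotzkin (p.filter vert) := by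
  unfold IsTwoMotzkin
  rw [sum_filter_vert]
  have h1 : (∀ q : List Step2, q <+: p → 0 ≤ (q.map Step2.h).sum) ↔ NN 0 p := by
    unfold NN; simp
  have h2 : (∀ q : List Step2, q <+: p.filter vert → 0 ≤ (q.map Step2.h).sum)
      ↔ NN 0 (p.filter vert) := by
    unfold NN; simp
  rw [h1, h2, NN_filter]

lemma sum_map_ofD (w : List DyckStep) :
    ((w.map ofD).map Step2.h).sum = (w.count .U : ℤ) - w.count .D := by
  induction w with
  | nil => simp
  | cons d t ih =>
    rw [map_cons, map_cons, sum_cons, ih]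
    cases d <;> simp [Step2.h, count_cons] <;> ring

lemma NN_map_ofD (w : List DyckStep) :
    NN 0 (w.map ofD) ↔ ∀ i, (w.take i).count .D ≤ (w.take i).count .U := by
  constructor
  · intro h i
    have := h ((w.take i).map ofD) ((take_prefix i w).map ofD)
    rw [sum_map_ofD] at this
    omega
  · intro h q hq
    obtain hq' := List.prefix_iff_eq_take.mp hq
    rw [← map_take] at hq'
    rw [hq', sum_map_ofD]
    have := h q.length
    omega

lemma isTwoMotzkin_map_ofD (w : List DyckStep) :
    IsTwoMotzkin (w.map ofD) ↔ (w.count .U = w.count .D ∧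
      ∀ i, (w.take i).count .D ≤ (w.take i).count .U) := by
  unfold IsTwoMotzkin
  rw [sum_map_ofD]
  have : (∀ q : List Step2, q <+: w.map ofD → 0 ≤ (q.map Step2.h).sum)
      ↔ NN 0 (w.map ofD) := by unfold NN; simp
  rw [this, NN_map_ofD]
  constructor
  · rintro ⟨h1, h2⟩; exact ⟨by omega, h2⟩
  · rintro ⟨h1, h2⟩; exact ⟨by omega, h2⟩

lemma countP_vert (p : List Step2) : p.countP vert = p.count .up + p.count .down := by
  induction p with
  | nil => rfl
  | cons a t ih => cases a <;> simp [countP_cons, count_cons, ih] <;> omega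

lemma sum_map_h (p : List Step2) :
    (p.map Step2.h).sum = (p.count .up : ℤ) - p.count .down := by
  induction p with
  | nil => simp
  | cons a t ih => cases a <;> simp [ih, Step2.h, count_cons] <;> ring

lemma count_up_filter (p : List Step2) : (p.filter vert).count .up = p.count .up := by
  induction p with
  | nil => rfl
  | cons a t ih => cases a <;> simp [filter_cons, count_cons, ih]

lemma count_up_map_ofD (w : List DyckStep) : (w.map ofD).count .up = w.count .U := by
  induction w with
  | nil => rfl
  | cons d t ih => cases d <;> simp [count_cons, ih]

lemma count_true_map_vert (p : List Step2) : (p.map vert).count true = p.countP vert := by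
  induction p with
  | nil => rfl
  | cons a t ih => cases a <;> simp [count_cons, countP_cons, ih]

lemma count_false_map_vert (p : List Step2) :
    (p.map vert).count false = p.countP (fun s => !vert s) := by
  induction p with
  | nil => rfl
  | cons a t ih => cases a <;> simp [count_cons, countP_cons, ih]

lemma bool_count (t : List Bool) : t.count true + t.count false = t.length := by
  induction t with
  | nil => rfl
  | cons b r ih => cases b <;> simp [count_cons, ih] <;> omega

lemma map_ofD_toD (l : List Step2) (h : ∀ s ∈ l, vert s = true) :
    (l.map toD).map ofD = l := by
  rw [map_map]
  conv_rhs => rw [← map_id l]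
  refine map_congr_left fun s hs => ?_
  have := h s hs
  cases s <;> simp_all [vert]


instance finite_aux {α : Type*} [Finite α] (n : ℕ) (P : List α → Prop) :
    Finite {l : List α // l.length = n ∧ P l} := by
  have : Finite {l : List α // l.length = n} := (List.finite_length_eq α n).to_subtype
  refine Finite.of_injective
    (fun x => (⟨x.1, x.2.1⟩ : {l : List α // l.length = n})) ?_
  intro a b hab
  simp only [Subtype.mk.injEq] at hab
  exact Subtype.ext hab

instance finite_aux2 {α : Type*} [Finite α] (n : ℕ) :
    Finite {l : List α // l.length = n} := (List.finite_length_eq α n).to_subtype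

lemma card_len (r : ℕ) : Nat.card {l : List Bool // l.length = r} = 2 ^ r := by
  induction r with
  | zero =>
    haveI : Unique {l : List Bool // l.length = 0} :=
      ⟨⟨⟨[], rfl⟩⟩, by rintro ⟨l, hl⟩; ext1; simpa using List.length_eq_zero_iff.mp hl⟩
    simp [Nat.card_unique]
  | succ r ih =>
    have hf : Function.Bijective
        (fun x : Bool × {l : List Bool // l.length = r} =>
          (⟨x.1 :: x.2.1, by simp [x.2.2]⟩ : {l : List Bool // l.length = r + 1})) := by
      constructor
      · rintro ⟨b, l, hl⟩ ⟨b', l', hl'⟩ hbl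
        simp only [Subtype.mk.injEq, List.cons.injEq] at hbl
        obtain ⟨rfl, h⟩ := hbl
        subst h
        rfl
      · rintro ⟨l, hl⟩
        cases l with
        | nil => simp at hl
        | cons b l => exact ⟨⟨b, ⟨l, by simpa using hl⟩⟩, rfl⟩
    rw [← Nat.card_congr (Equiv.ofBijective _ hf), Nat.card_prod, ih,
      Nat.card_eq_fintype_card, Fintype.card_bool]
    ring

lemma card_count (m : ℕ) : ∀ t : ℕ,
    Nat.card {l : List Bool // l.length = m ∧ l.count true = t} = m.choose t := by
  induction m with
  | zero =>
    intro t
    cases t with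
    | zero =>
      haveI : Unique {l : List Bool // l.length = 0 ∧ l.count true = 0} :=
        ⟨⟨⟨[], rfl, rfl⟩⟩, by
          rintro ⟨l, hl, hc⟩; ext1; simpa using List.length_eq_zero_iff.mp hl⟩
      rw [Nat.card_unique, Nat.choose_self]
    | succ t =>
      haveI : IsEmpty {l : List Bool // l.length = 0 ∧ l.count true = t + 1} := by
        constructor; rintro ⟨l, hl, hc⟩
        rw [List.length_eq_zero_iff.mp hl] at hc
        simp at hc
      rw [Nat.card_of_isEmpty, Nat.choose_zero_succ]
  | succ m ih =>
    intro t
    cases t with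
    | zero =>
      have hf : Function.Bijective
          (fun x : {l : List Bool // l.length = m ∧ l.count true = 0} =>
            (⟨false :: x.1, by simp [x.2.1, x.2.2]⟩ :
              {l : List Bool // l.length = m + 1 ∧ l.count true = 0})) := by
        constructor
        · rintro ⟨l, hl⟩ ⟨l', hl'⟩ hll
          simp only [Subtype.mk.injEq, List.cons.injEq] at hll
          exact Subtype.ext hll.2
        · rintro ⟨l, hl, hc⟩
          cases l with
          | nil => simp at hl
          | cons b l =>
            cases b with
            | true => simp [count_cons] at hc
            | false =>
              exact ⟨⟨l, by simpa using hl, by simpa [count_cons] using hc⟩, rfl⟩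
      rw [← Nat.card_congr (Equiv.ofBijective _ hf), ih 0]
      simp
    | succ t =>
      have hf : Function.Bijective
          (fun x : {l : List Bool // l.length = m ∧ l.count true = t + 1} ⊕
              {l : List Bool // l.length = m ∧ l.count true = t} =>
            (match x with
              | .inl l => ⟨false :: l.1, by simp [l.2.1, l.2.2]⟩
              | .inr l => ⟨true :: l.1, by simp [l.2.1, count_cons, l.2.2]⟩ :
              {l : List Bool // l.length = m + 1 ∧ l.count true = t + 1})) := by
        constructor
        · rintro (⟨l, hl⟩ | ⟨l, hl⟩) (⟨l', hl'⟩ | ⟨l', hl'⟩) hll <;>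
            simp only [Subtype.mk.injEq, List.cons.injEq] at hll <;>
            first
              | (exact congrArg _ (Subtype.ext hll.2))
              | (exact absurd hll.1 (by simp))
        · rintro ⟨l, hl, hc⟩
          cases l with
          | nil => simp at hl
          | cons b l =>
            cases b with
            | true =>
              exact ⟨.inr ⟨l, by simpa using hl, by simpa [count_cons] using hc⟩, rfl⟩
            | false =>
              exact ⟨.inl ⟨l, by simpa using hl, by simpa [count_cons] using hc⟩, rfl⟩
      rw [← Nat.card_congr (Equiv.ofBijective _ hf), Nat.card_sum, ih (t + 1), ih t,
        Nat.choose_succ_succ]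
      ring

lemma card_dyck (j : ℕ) : Nat.card {d : DyckWord // d.semilength = j} = catalan j := by
  rw [Nat.card_eq_fintype_card, DyckWord.card_dyckWord_semilength_eq_catalan]

end TM
namespace TM

lemma card_main (m j : ℕ) (hjm : 2 * j ≤ m) :
    Nat.card {p : List Step2 // p.length = m ∧ IsTwoMotzkin p ∧ p.count Step2.up = j}
      = m.choose (2 * j) * (catalan j * 2 ^ (m - 2 * j)) := by
  set B := {t : List Bool // t.length = m ∧ t.count true = 2 * j} ×
    {d : DyckWord // d.semilength = j} × {c : List Bool // c.length = m - 2 * j} with hB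
  have hv : ∀ x : B, x.2.1.1.toList.length = x.1.1.count true := by
    rintro ⟨⟨t, ht1, ht2⟩, ⟨d, hd⟩, ⟨c, hc⟩⟩
    simp only [ht2, ← d.two_mul_semilength_eq_length, hd]
  have hc : ∀ x : B, x.2.2.1.length = x.1.1.count false := by
    rintro ⟨⟨t, ht1, ht2⟩, ⟨d, hd⟩, ⟨c, hc⟩⟩
    have := bool_count t
    simp only [hc]
    omega
  have hf : Function.Bijective (fun x : B =>
      (⟨merge x.1.1 x.2.1.1.toList x.2.2.1, by
        constructor
        · have := congrArg List.length (merge_map_vert x.1.1 x.2.1.1.toList x.2.2.1 (hv x) (hc x))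
          simpa using this.trans x.1.2.1
        constructor
        · rw [isTwoMotzkin_filter, merge_filter_vert _ _ _ (hv x) (hc x), isTwoMotzkin_map_ofD]
          exact ⟨x.2.1.1.count_U_eq_count_D, x.2.1.1.count_D_le_count_U⟩
        · rw [← count_up_filter, merge_filter_vert _ _ _ (hv x) (hc x), count_up_map_ofD]
          exact x.2.1.2⟩ :
        {p : List Step2 // p.length = m ∧ IsTwoMotzkin p ∧ p.count Step2.up = j})) := by
    constructor
    · intro x y hxy
      simp only [Subtype.mk.injEq] at hxy
      have ht : x.1.1 = y.1.1 := by
        have h1 := merge_map_vert x.1.1 x.2.1.1.toList x.2.2.1 (hv x) (hc x)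
        have h2 := merge_map_vert y.1.1 y.2.1.1.toList y.2.2.1 (hv y) (hc y)
        rw [← h1, ← h2, hxy]
      have hd : x.2.1.1.toList = y.2.1.1.toList := by
        have h1 := merge_filter_vert x.1.1 x.2.1.1.toList x.2.2.1 (hv x) (hc x)
        have h2 := merge_filter_vert y.1.1 y.2.1.1.toList y.2.2.1 (hv y) (hc y)
        rw [hxy, h2] at h1
        have := congrArg (List.map toD) h1
        simpa [List.map_map, Function.comp_def] using this.symm
      have hcc : x.2.2.1 = y.2.2.1 := by
        have h1 := merge_filter_horiz x.1.1 x.2.1.1.toList x.2.2.1 (hv x) (hc x)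
        have h2 := merge_filter_horiz y.1.1 y.2.1.1.toList y.2.2.1 (hv y) (hc y)
        rw [hxy, h2] at h1
        have := congrArg (List.map colOf) h1
        simpa [List.map_map, Function.comp_def] using this.symm
      obtain ⟨⟨t, _⟩, ⟨d, _⟩, ⟨c, _⟩⟩ := x
      obtain ⟨⟨t', _⟩, ⟨d', _⟩, ⟨c', _⟩⟩ := y
      simp only at ht hd hcc
      rw [Prod.ext_iff, Prod.ext_iff]
      exact ⟨Subtype.ext ht, Subtype.ext (DyckWord.ext hd), Subtype.ext hcc⟩
    · rintro ⟨p, hm, hM, hj⟩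
      have hvp : ∀ s ∈ p.filter vert, vert s = true := fun s hs => by
        simpa using (List.mem_filter.mp hs).2
      have key : ((p.filter vert).map toD).map ofD = p.filter vert := map_ofD_toD _ hvp
      have hdown : p.count .down = j := by
        have h1 := sum_map_h p
        rw [hM.1, hj] at h1
        omega
      have hMf : IsTwoMotzkin (((p.filter vert).map toD).map ofD) := by
        rw [key]; exact (isTwoMotzkin_filter p).mp hM
      rw [isTwoMotzkin_map_ofD] at hMf
      have hsemi : ((p.filter vert).map toD).count .U = j := by
        rw [← count_up_map_ofD, key, count_up_filter, hj]
      have hcountP : p.countP vert = 2 * j := by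
        rw [countP_vert, hj, hdown]; ring
      refine ⟨⟨⟨p.map vert, by simp [hm], by
          rw [count_true_map_vert, hcountP]⟩,
        ⟨⟨(p.filter vert).map toD, hMf.1, hMf.2⟩, hsemi⟩,
        ⟨(p.filter (fun s => !vert s)).map colOf, by
          have h1 := count_false_map_vert p
          have h2 := bool_count (p.map vert)
          rw [count_true_map_vert, hcountP] at h2
          rw [length_map, ← List.countP_eq_length_filter, ← h1]
          simp only [length_map] at h2
          omega⟩⟩, ?_⟩
      exact Subtype.ext (merge_decomp p)
  rw [← Nat.card_congr (Equiv.ofBijective _ hf), hB, Nat.card_prod, Nat.card_prod,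
    card_count, card_dyck, card_len]

end TM

/-- The number of 2-Motzkin paths of length `n-1` with exactly `k-1` up steps is
`(2^(n-2k+1)/k)·C(n-1,2k-2)·C(2k-2,k-1)`. -/
theorem card_twoMotzkin_up (n k : ℕ) (hn : 1 ≤ n) (hk : 1 ≤ k) (h : 2 * k - 1 ≤ n) :
    (Nat.card {p : List Step2 //
        p.length = n - 1 ∧ IsTwoMotzkin p ∧ p.count Step2.up = k - 1} : ℚ) =
      (2 ^ (n + 1 - 2 * k) / k : ℚ) * (n - 1).choose (2 * k - 2) * (2 * k - 2).choose (k - 1) := by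
  have hjm : 2 * (k - 1) ≤ n - 1 := by omega
  rw [TM.card_main (n - 1) (k - 1) hjm]
  have hchoose : (2 * k - 2).choose (k - 1) = k * catalan (k - 1) := by
    have h1 := succ_mul_catalan_eq_centralBinom (k - 1)
    rw [Nat.centralBinom_eq_two_mul_choose] at h1
    have e : 2 * (k - 1) = 2 * k - 2 := by omega
    have e' : k - 1 + 1 = k := by omega
    rw [e, e'] at h1
    exact h1.symm
  have e1 : n - 1 - 2 * (k - 1) = n + 1 - 2 * k := by omega
  have e2 : 2 * (k - 1) = 2 * k - 2 := by omega
  rw [e1, e2, hchoose]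
  have hk0 : (k : ℚ) ≠ 0 := Nat.cast_ne_zero.mpr (by omega)
  push_cast
  field_simp
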